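/- Let m be a positive natural number and s : Fin m → ℝ with s i ≥ Real.exp 2 for all i. Define the Gini coefficient of a positive weight function w : Fin m → ℝ as G(w) = (∑_{i} ∑_{j} |w i − w j|) / (2 · m · ∑_{i} w i). Then G(fun i => Real.log (s i)) ≤ G(fun i => Real.sqrt (s i)); that is, the Gini coefficient of the logarithmic stake weights is at most that of the square-root stake weights. -/

import Mathlib

open Finset

/-- The Gini coefficient of a weight function `w` on `m` validators, via the
mean-absolute-difference formula. -/
noncomputable def gini (m : ℕ) (w : Fin m → ℝ) : ℝ :=
  (∑ i, ∑ j, |w i - w j|) / (2 * m * ∑ i, w i)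

/-- Core three-variable inequality for sorted values. -/
lemma tri (A B C A' B' C' : ℝ)
    (h1 : C ≤ B) (h2 : B ≤ A) (h1' : C' ≤ B') (h2' : B' ≤ A')
    (hr : A' * C ≤ C' * A) :
    |A' - B'| * C + |B' - C'| * A + |A' - C'| * B ≤
      |A - B| * C' + |B - C| * A' + |A - C| * B' := by
  rw [abs_of_nonneg (by linarith), abs_of_nonneg (by linarith),
    abs_of_nonneg (by linarith), abs_of_nonneg (by linarith),
    abs_of_nonneg (by linarith), abs_of_nonneg (by linarith)]
  nlinarith [hr]

lemma factor3 (m : ℕ) (u v : Fin m → ℝ) :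
    ∑ i, ∑ j, ∑ k, (|u i - u j| * v k + |u j - u k| * v i + |u i - u k| * v j)
      = 3 * ((∑ i, ∑ j, |u i - u j|) * ∑ i, v i) := by
  have h1 : ∑ i : Fin m, ∑ j : Fin m, ∑ k : Fin m, |u i - u j| * v k
      = (∑ i, ∑ j, |u i - u j|) * ∑ i, v i := by
    simp only [← Finset.mul_sum]; simp only [← Finset.sum_mul]
  have h2 : ∑ i : Fin m, ∑ j : Fin m, ∑ k : Fin m, |u j - u k| * v i
      = (∑ i, ∑ j, |u i - u j|) * ∑ i, v i := by
    simp only [← Finset.sum_mul]; simp only [← Finset.mul_sum]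
  have h3 : ∑ i : Fin m, ∑ j : Fin m, ∑ k : Fin m, |u i - u k| * v j
      = (∑ i, ∑ j, |u i - u j|) * ∑ i, v i := by
    have : ∀ i : Fin m, ∑ j : Fin m, ∑ k : Fin m, |u i - u k| * v j
        = ∑ k : Fin m, ∑ j : Fin m, |u i - u k| * v j := fun i => Finset.sum_comm
    simp only [this]
    simp only [← Finset.mul_sum]; simp only [← Finset.sum_mul]
  calc ∑ i : Fin m, ∑ j : Fin m, ∑ k : Fin m,
        (|u i - u j| * v k + |u j - u k| * v i + |u i - u k| * v j)
      = (∑ i : Fin m, ∑ j : Fin m, ∑ k : Fin m, |u i - u j| * v k)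
        + (∑ i : Fin m, ∑ j : Fin m, ∑ k : Fin m, |u j - u k| * v i)
        + (∑ i : Fin m, ∑ j : Fin m, ∑ k : Fin m, |u i - u k| * v j) := by
        simp [Finset.sum_add_distrib]
    _ = 3 * ((∑ i, ∑ j, |u i - u j|) * ∑ i, v i) := by rw [h1, h2, h3]; ring

/-- For stakes at least `e²`, the Gini coefficient of the logarithmic stake weights
is at most that of the square-root stake weights. -/
theorem lsw_gini_le_srsw (m : ℕ) (hm : 0 < m) (s : Fin m → ℝ)
    (hs : ∀ i, Real.exp 2 ≤ s i) :
    gini m (fun i => Real.log (s i)) ≤ gini m (fun i => Real.sqrt (s i)) := by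
  set a : Fin m → ℝ := fun i => Real.sqrt (s i) with ha_def
  set b : Fin m → ℝ := fun i => Real.log (s i) with hb_def
  have hspos : ∀ i, (0:ℝ) < s i := fun i => lt_of_lt_of_le (Real.exp_pos 2) (hs i)
  have he2 : Real.exp 2 = Real.exp 1 ^ 2 := by
    rw [← Real.exp_nat_mul]; norm_num
  have hae : ∀ i, Real.exp 1 ≤ a i := by
    intro i
    have : Real.sqrt (Real.exp 2) ≤ a i := Real.sqrt_le_sqrt (hs i)
    rwa [he2, Real.sqrt_sq (Real.exp_pos 1).le] at this
  have hapos : ∀ i, (0:ℝ) < a i := fun i => lt_of_lt_of_le (Real.exp_pos 1) (hae i)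
  have hbpos : ∀ i, (0:ℝ) < b i := by
    intro i
    have : Real.log (Real.exp 2) ≤ b i := Real.log_le_log (Real.exp_pos 2) (hs i)
    rw [Real.log_exp] at this; linarith
  have hamono : ∀ i j, s i ≤ s j → a i ≤ a j := fun i j h => Real.sqrt_le_sqrt h
  have hbmono : ∀ i j, s i ≤ s j → b i ≤ b j := fun i j h =>
    Real.log_le_log (hspos i) h
  -- ratio: s j ≤ s i → b i * a j ≤ b j * a i
  have hratio : ∀ i j, s j ≤ s i → b i * a j ≤ b j * a i := by
    intro i j h
    have h1 : Real.log (a i) / a i ≤ Real.log (a j) / a j :=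
      Real.log_div_self_antitoneOn (hae j) (hae i) (hamono j i h)
    have hlog : ∀ k, Real.log (a k) = b k / 2 := by
      intro k
      show Real.log (Real.sqrt (s k)) = Real.log (s k) / 2
      rw [Real.log_sqrt (hspos k).le]
    rw [hlog i, hlog j, div_div, div_div,
      div_le_div_iff₀ (by have := hapos i; positivity) (by have := hapos j; positivity)] at h1
    nlinarith [h1]
  have hkey : ∀ i j k : Fin m,
      |b i - b j| * a k + |b j - b k| * a i + |b i - b k| * a j ≤
        |a i - a j| * b k + |a j - a k| * b i + |a i - a k| * b j := by
    intro i j k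
    rcases le_total (s i) (s j) with hij | hij <;>
      rcases le_total (s j) (s k) with hjk | hjk <;>
        rcases le_total (s i) (s k) with hik | hik
    · have h := tri (a k) (a j) (a i) (b k) (b j) (b i) (hamono i j hij)
        (hamono j k hjk) (hbmono i j hij) (hbmono j k hjk) (hratio k i hik)
      simp only [abs_sub_comm] at h ⊢; linarith
    · have h := tri (a k) (a j) (a i) (b k) (b j) (b i) (hamono i j hij)
        (hamono j k hjk) (hbmono i j hij) (hbmono j k hjk) (hratio k i (hij.trans hjk))
      simp only [abs_sub_comm] at h ⊢; linarith
    · have h := tri (a j) (a k) (a i) (b j) (b k) (b i) (hamono i k hik)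
        (hamono k j hjk) (hbmono i k hik) (hbmono k j hjk) (hratio j i hij)
      simp only [abs_sub_comm] at h ⊢; linarith
    · have h := tri (a j) (a i) (a k) (b j) (b i) (b k) (hamono k i hik)
        (hamono i j hij) (hbmono k i hik) (hbmono i j hij) (hratio j k hjk)
      simp only [abs_sub_comm] at h ⊢; linarith
    · have h := tri (a k) (a i) (a j) (b k) (b i) (b j) (hamono j i hij)
        (hamono i k hik) (hbmono j i hij) (hbmono i k hik) (hratio k j hjk)
      simp only [abs_sub_comm] at h ⊢; linarith
    · have h := tri (a i) (a k) (a j) (b i) (b k) (b j) (hamono j k hjk)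
        (hamono k i hik) (hbmono j k hjk) (hbmono k i hik) (hratio i j hij)
      simp only [abs_sub_comm] at h ⊢; linarith
    · have h := tri (a i) (a j) (a k) (b i) (b j) (b k) (hamono k j hjk)
        (hamono j i hij) (hbmono k j hjk) (hbmono j i hij) (hratio i k (hjk.trans hij))
      linarith
    · have h := tri (a i) (a j) (a k) (b i) (b j) (b k) (hamono k j hjk)
        (hamono j i hij) (hbmono k j hjk) (hbmono j i hij) (hratio i k hik)
      linarith
  have hsum : ∑ i, ∑ j, ∑ k, (|b i - b j| * a k + |b j - b k| * a i + |b i - b k| * a j)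
      ≤ ∑ i, ∑ j, ∑ k, (|a i - a j| * b k + |a j - a k| * b i + |a i - a k| * b j) :=
    Finset.sum_le_sum fun i _ => Finset.sum_le_sum fun j _ =>
      Finset.sum_le_sum fun k _ => hkey i j k
  rw [factor3, factor3] at hsum
  have hmain : (∑ i, ∑ j, |b i - b j|) * ∑ i, a i
      ≤ (∑ i, ∑ j, |a i - a j|) * ∑ i, b i := by linarith
  have hne : Nonempty (Fin m) := ⟨⟨0, hm⟩⟩
  have hm' : (0:ℝ) < m := by exact_mod_cast hm
  have hSa : (0:ℝ) < ∑ i, a i := Finset.sum_pos (fun i _ => hapos i) Finset.univ_nonempty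
  have hSb : (0:ℝ) < ∑ i, b i := Finset.sum_pos (fun i _ => hbpos i) Finset.univ_nonempty
  show (∑ i, ∑ j, |b i - b j|) / (2 * m * ∑ i, b i)
      ≤ (∑ i, ∑ j, |a i - a j|) / (2 * m * ∑ i, a i)
  rw [div_le_div_iff₀ (mul_pos (mul_pos two_pos hm') hSb) (mul_pos (mul_pos two_pos hm') hSa)]
  calc (∑ i, ∑ j, |b i - b j|) * (2 * m * ∑ i, a i)
      = 2 * m * ((∑ i, ∑ j, |b i - b j|) * ∑ i, a i) := by ring
    _ ≤ 2 * m * ((∑ i, ∑ j, |a i - a j|) * ∑ i, b i) :=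
        mul_le_mul_of_nonneg_left hmain (by positivity)
    _ = (∑ i, ∑ j, |a i - a j|) * (2 * m * ∑ i, b i) := by ring
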